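/- Let {X_n; f_n^{n+1}} be an inverse sequence of countable regular spaces, each with analytic topology and each a q⁺ space. Then every countable subspace of the inverse limit X_∞ is a q⁺ space. -/

import Mathlib

/-- A topology on `X` is analytic if, viewed as a subset of the Cantor cube
`2^X = X → Bool` (via characteristic functions), it is an analytic set. -/
def IsAnalyticTopology (X : Type*) [TopologicalSpace X] : Prop :=
  MeasureTheory.AnalyticSet {χ : X → Bool | IsOpen {x | χ x = true}}

/-- A space is q⁺ if for every `A`, every `x ∈ closure A` and every partition of
`A` into finite sets `(F n)`, there is a partial selector `S ⊆ A` (meeting each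
`F n` in at most one point) with `x ∈ closure S`. -/
def QPlusSpace (X : Type*) [TopologicalSpace X] : Prop :=
  ∀ (A : Set X) (x : X), x ∈ closure A →
    ∀ F : ℕ → Set X, (∀ n, (F n).Finite) →
      (Pairwise fun i j => Disjoint (F i) (F j)) → (⋃ n, F n) = A →
      ∃ S ⊆ A, x ∈ closure S ∧ ∀ n, (S ∩ F n).Subsingleton

set_option linter.unusedSectionVars false
set_option maxHeartbeats 1000000

open Set Topology MeasureTheory

section Bridge
variable {X : ℕ → Type*} [∀ n, TopologicalSpace (X n)]

/-- Iterated bonding map of the inverse sequence. -/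
def invBridge (f : ∀ n, X (n + 1) → X n) {i m : ℕ} (h : i ≤ m) : X m → X i :=
  Nat.leRecOn (C := fun k => X k → X i) h (fun {k} g => g ∘ f k) id

theorem invBridge_self (f : ∀ n, X (n + 1) → X n) {i : ℕ} (h : i ≤ i) :
    invBridge f h = id := by
  funext v
  exact congrFun (Nat.leRecOn_self (C := fun k => X k → X i)
    (next := fun {k} g => g ∘ f k) id) v

theorem invBridge_succ (f : ∀ n, X (n + 1) → X n) {i m : ℕ} (h : i ≤ m) (h2 : i ≤ m + 1) :
    invBridge f h2 = (invBridge f h) ∘ f m := by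
  funext v
  exact congrFun (Nat.leRecOn_succ (C := fun k => X k → X i) h
    (next := fun {k} g => g ∘ f k) id) v

theorem invBridge_continuous (f : ∀ n, X (n + 1) → X n) (hf : ∀ n, Continuous (f n))
    {i m : ℕ} (h : i ≤ m) : Continuous (invBridge f h) := by
  induction m, h using Nat.le_induction with
  | base => rw [invBridge_self]; exact continuous_id
  | succ m h ih => rw [invBridge_succ f h]; exact ih.comp (hf m)

theorem invBridge_coh (f : ∀ n, X (n + 1) → X n) {x : ∀ n, X n}
    (hx : ∀ n, x n = f n (x (n + 1))) {i m : ℕ} (h : i ≤ m) :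
    invBridge f h (x m) = x i := by
  induction m, h using Nat.le_induction with
  | base => rw [invBridge_self]; rfl
  | succ m h ih =>
    rw [invBridge_succ f h]
    show invBridge f h (f m (x (m + 1))) = x i
    rw [← hx m]; exact ih

/-- Closure in the inverse limit (sitting inside the product) is detected coordinatewise. -/
theorem invLimit_mem_closure_iff (f : ∀ n, X (n + 1) → X n) (hf : ∀ n, Continuous (f n))
    {W : Set (∀ n, X n)} {z : ∀ n, X n} (hz : ∀ n, z n = f n (z (n + 1)))
    (hW : ∀ w ∈ W, ∀ n, w n = f n (w (n + 1))) :
    z ∈ closure W ↔ ∀ k, z k ∈ closure ((fun w => w k) '' W) := by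
  classical
  constructor
  · intro h k
    exact map_mem_closure (continuous_apply k) h (fun w hw => Set.mem_image_of_mem _ hw)
  · intro hcl
    rw [mem_closure_iff_nhds]
    intro t ht
    rw [nhds_pi] at ht
    obtain ⟨I, hIfin, t', ht'mem, ht'sub⟩ := Filter.mem_pi.mp ht
    obtain ⟨m, hm⟩ := hIfin.bddAbove
    choose u husub huopen humem using fun i => mem_nhds_iff.mp (ht'mem i)
    set g : ℕ → Set (X m) :=
      fun i => if hi : i ∈ I then invBridge f (hm hi) ⁻¹' (u i) else univ with hg
    have hVopen : IsOpen (⋂ i ∈ I, g i) := by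
      refine hIfin.isOpen_biInter fun i hi => ?_
      rw [hg]; simp only [dif_pos hi]
      exact (huopen i).preimage (invBridge_continuous f hf (hm hi))
    have hzV : z m ∈ ⋂ i ∈ I, g i := by
      refine mem_biInter fun i hi => ?_
      simp only [hg, dif_pos hi, mem_preimage, invBridge_coh f hz (hm hi)]
      exact humem i
    obtain ⟨-, hV, w, hwW, rfl⟩ := mem_closure_iff.mp (hcl m) _ hVopen hzV
    refine ⟨w, ht'sub fun i hi => ?_, hwW⟩
    have hwi := mem_iInter₂.1 hV i hi
    simp only [hg, dif_pos hi, mem_preimage] at hwi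
    have : invBridge f (hm hi) (w m) = w i := invBridge_coh f (hW w hwW) (hm hi)
    rw [this] at hwi
    exact husub i hwi

end Bridge

theorem analyticSet_inter' {α : Type*} [TopologicalSpace α] [T2Space α] {s t : Set α}
    (hs : MeasureTheory.AnalyticSet s) (ht : MeasureTheory.AnalyticSet t) :
    MeasureTheory.AnalyticSet (s ∩ t) := by
  have h : s ∩ t = ⋂ b : Bool, (bif b then s else t) := by
    ext u
    simp only [Set.mem_inter_iff, Set.mem_iInter, Bool.forall_bool, Bool.cond_false,
      Bool.cond_true]
    tauto
  rw [h]
  refine MeasureTheory.AnalyticSet.iInter (fun b => ?_)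
  cases b
  · simpa using ht
  · simpa using hs

noncomputable def flipHomeo (G : Set ℕ) : (ℕ → Bool) ≃ₜ (ℕ → Bool) := by
  classical
  exact {
    toFun := fun β n => if n ∈ G then !β n else β n
    invFun := fun β n => if n ∈ G then !β n else β n
    left_inv := fun β => by funext n; by_cases h : n ∈ G <;> simp [h]
    right_inv := fun β => by funext n; by_cases h : n ∈ G <;> simp [h]
    continuous_toFun := continuous_pi fun n => by
      by_cases h : n ∈ G
      · simp only [if_pos h]
        exact (continuous_of_discreteTopology (f := fun b => !b)).comp (continuous_apply n)
      · simp only [if_neg h]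
        exact continuous_apply n
    continuous_invFun := continuous_pi fun n => by
      by_cases h : n ∈ G
      · simp only [if_pos h]
        exact (continuous_of_discreteTopology (f := fun b => !b)).comp (continuous_apply n)
      · simp only [if_neg h]
        exact continuous_apply n }

theorem flipHomeo_apply_mem {G : Set ℕ} {β : ℕ → Bool} {n : ℕ} (h : n ∈ G) :
    flipHomeo G β n = !β n := by
  simp [flipHomeo, h]

theorem flipHomeo_apply_not_mem {G : Set ℕ} {β : ℕ → Bool} {n : ℕ} (h : n ∉ G) :
    flipHomeo G β n = β n := by
  simp [flipHomeo, h]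


/-- Theorem 3.5: for an inverse sequence of countable regular q⁺ spaces with
analytic topologies, every countable subspace of the inverse limit is q⁺. -/
theorem stmt16 (X : ℕ → Type*) [∀ n, TopologicalSpace (X n)]
    [∀ n, Countable (X n)] [∀ n, RegularSpace (X n)]
    (hA : ∀ n, IsAnalyticTopology (X n))
    (f : ∀ n, X (n + 1) → X n) (hf : ∀ n, Continuous (f n))
    (hq : ∀ n, QPlusSpace (X n)) :
    ∀ Y : Set {x : ∀ n, X n // ∀ n, x n = f n (x (n + 1))},
      Y.Countable → QPlusSpace ↥Y := by
  classical
  intro Y _ A x hx F hFfin hFdis hFU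
  haveI : Nonempty ↥Y := ⟨x⟩
  -- coordinate projections
  set p : ∀ k, ↥Y → X k := fun k a => a.1.1 k with hp
  have hpc : ∀ k, Continuous (p k) :=
    fun k => (continuous_apply k).comp (continuous_subtype_val.comp continuous_subtype_val)
  -- coordinatewise description of closure in Y
  have key2 : ∀ (S : Set ↥Y) (w : ↥Y),
      w ∈ closure S ↔ ∀ k, p k w ∈ closure (p k '' S) := by
    intro S w
    rw [closure_subtype, closure_subtype, Set.image_image]
    have := invLimit_mem_closure_iff f hf (W := (fun a : ↥Y => a.1.1) '' S)
      (z := w.1.1) w.1.2 (fun v hv => by obtain ⟨a, -, rfl⟩ := hv; exact a.1.2)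
    rw [this]
    refine forall_congr' fun k => ?_
    rw [Set.image_image]
  -- the easy case: some point of A is in every neighborhood of x
  by_cases hsing : ∃ a ∈ A, x ∈ closure ({a} : Set ↥Y)
  · obtain ⟨a, haA, hacl⟩ := hsing
    exact ⟨{a}, by simpa using haA, hacl,
      fun n u hu v hv => by
        have : u = a := hu.1
        have : v = a := hv.1
        subst_vars; rfl⟩
  push_neg at hsing
  -- no finite set is "large"
  have hfin : ∀ S : Set ↥Y, S ⊆ A → S.Finite → x ∉ closure S := by
    intro S hSA hSfin
    revert hSA
    refine Set.Finite.induction_on (motive := fun S _ => S ⊆ A → x ∉ closure S) S hSfin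
      (by simp) ?_
    intro a s _ _ ih hSA
    rw [show insert a s = {a} ∪ s from rfl, closure_union]
    rintro (h | h)
    · exact hsing a (hSA (Set.mem_insert a s)) h
    · exact ih (fun u hu => hSA (Set.mem_insert_of_mem a hu)) h
  -- pieces restricted to a set of indices
  set Res : Set ℕ → Set ↥Y := fun B => ⋃ n ∈ B, F n with hRes
  set Large : Set ℕ → Prop := fun B => x ∈ closure (Res B) with hLarge
  have hResA : ∀ B, Res B ⊆ A := by
    intro B a ha
    obtain ⟨n, -, hn⟩ := Set.mem_iUnion₂.1 ha
    rw [← hFU]; exact Set.mem_iUnion_of_mem n hn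
  have hResfin : ∀ B : Set ℕ, B.Finite → (Res B).Finite :=
    fun B hB => hB.biUnion (fun n _ => hFfin n)
  have hnotfin : ∀ B : Set ℕ, B.Finite → ¬ Large B :=
    fun B hB => hfin _ (hResA B) (hResfin B hB)
  have hLunion : ∀ B B', Large (B ∪ B') → Large B ∨ Large B' := by
    intro B B' h
    rw [hLarge] at h ⊢
    rw [show Res (B ∪ B') = Res B ∪ Res B' from Set.biUnion_union B B' F,
      closure_union] at h
    exact h
  have hLmono : ∀ {B B'}, B ⊆ B' → Large B → Large B' := by
    intro B B' hBB h
    exact closure_mono (Set.biUnion_subset_biUnion_left hBB) h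
  have hLA : Large Set.univ := by
    have h : Res Set.univ = A := by rw [hRes]; simpa using hFU
    show x ∈ closure (Res Set.univ)
    rw [h]; exact hx
  -- THE SPLITTING LEMMA
  have hnotlarge : ∀ D : Set ℕ, (¬ Large D) ↔
      ∃ k, ∃ V : Set (X k), IsOpen V ∧ p k x ∈ V ∧ ∀ a ∈ Res D, p k a ∉ V := by
    intro D
    rw [show (Large D) = (x ∈ closure (Res D)) from rfl, key2 (Res D) x]
    push_neg
    refine exists_congr fun k => ?_
    rw [mem_closure_iff]
    push_neg
    constructor
    · rintro ⟨V, hVo, hxV, hVe⟩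
      refine ⟨V, hVo, hxV, fun a ha hmem => ?_⟩
      rw [← Set.not_nonempty_iff_eq_empty] at hVe
      exact hVe ⟨p k a, hmem, Set.mem_image_of_mem _ ha⟩
    · rintro ⟨V, hVo, hxV, hVn⟩
      refine ⟨V, hVo, hxV, ?_⟩
      rw [← Set.not_nonempty_iff_eq_empty]
      rintro ⟨u, huV, a, ha, rfl⟩
      exact hVn a ha huV
  have hsplit : ∀ C : Set ℕ, Large C → ∃ B, B ⊆ C ∧ Large B ∧ Large (C \ B) := by
    intro C hC
    by_contra hns
    push_neg at hns
    have dicho : ∀ B, B ⊆ C → Large B ∨ Large (C \ B) := by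
      intro B hBC
      have h : B ∪ (C \ B) = C := Set.union_diff_cancel hBC
      exact hLunion _ _ (by rw [show (Large (B ∪ (C \ B))) = (x ∈ closure (Res (B ∪ (C \ B)))) from rfl, h]; exact hC)
    have hinter : ∀ B₁ B₂, B₁ ⊆ C → B₂ ⊆ C → Large B₁ → Large B₂ → Large (B₁ ∩ B₂) := by
      intro B₁ B₂ h1 h2 hL1 hL2
      rcases dicho (B₁ ∩ B₂) ((Set.inter_subset_left).trans h1) with h | h
      · exact h
      · exfalso
        rw [Set.diff_inter] at h
        rcases hLunion _ _ h with h' | h'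
        · exact hns B₁ h1 hL1 h'
        · exact hns B₂ h2 hL2 h'
    -- the family of "large" sets is an analytic subset of the Cantor space
    set Q : ∀ k, Set (ℕ → Bool) := fun k =>
      Prod.fst '' ((Prod.snd ⁻¹' {χ : X k → Bool | IsOpen {u | χ u = true}}) ∩
        {q : (ℕ → Bool) × (X k → Bool) | q.2 (p k x) = true ∧
          ∀ n ∈ C, ∀ a ∈ F n, q.1 n = false → q.2 (p k a) = false}) with hQ
    have hQan : ∀ k, AnalyticSet (Q k) := by
      intro k
      haveI : PolishSpace (X k → Bool) := @instPolishSpaceOfSeparableSpaceOfIsCompletelyMetrizableSpace _ _ inferInstance inferInstance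
      haveI : PolishSpace (ℕ → Bool) := @instPolishSpaceOfSeparableSpaceOfIsCompletelyMetrizableSpace _ _ inferInstance inferInstance
      refine MeasureTheory.AnalyticSet.image_of_continuous ?_ continuous_fst
      refine analyticSet_inter' ((hA k).preimage continuous_snd) ?_
      refine IsClosed.analyticSet ?_
      have hrw : {q : (ℕ → Bool) × (X k → Bool) | q.2 (p k x) = true ∧
          ∀ n ∈ C, ∀ a ∈ F n, q.1 n = false → q.2 (p k a) = false} =
          {q : (ℕ → Bool) × (X k → Bool) | q.2 (p k x) = true} ∩
          ⋂ n ∈ C, ⋂ a ∈ F n, ({q : (ℕ → Bool) × (X k → Bool) | q.1 n = true} ∪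
            {q : (ℕ → Bool) × (X k → Bool) | q.2 (p k a) = false}) := by
        ext q
        simp only [Set.mem_inter_iff, Set.mem_iInter, Set.mem_setOf_eq, Set.mem_union]
        constructor
        · rintro ⟨h1, h2⟩
          refine ⟨h1, fun n hn a ha => ?_⟩
          rcases Bool.eq_false_or_eq_true (q.1 n) with h | h
          · exact Or.inl h
          · exact Or.inr (h2 n hn a ha h)
        · rintro ⟨h1, h2⟩
          refine ⟨h1, fun n hn a ha hfalse => ?_⟩
          rcases h2 n hn a ha with h | h
          · rw [hfalse] at h; exact absurd h (by simp)
          · exact h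
      rw [hrw]
      refine IsClosed.inter ?_ ?_
      · exact isClosed_eq ((continuous_apply (p k x)).comp continuous_snd) continuous_const
      · refine isClosed_biInter fun n hn => isClosed_biInter fun a ha => IsClosed.union ?_ ?_
        · exact isClosed_eq ((continuous_apply n).comp continuous_fst) continuous_const
        · exact isClosed_eq ((continuous_apply (p k a)).comp continuous_snd) continuous_const
    have hQmem : ∀ k (β : ℕ → Bool), β ∈ Q k ↔
        ∃ V : Set (X k), IsOpen V ∧ p k x ∈ V ∧
          ∀ n ∈ C, ∀ a ∈ F n, β n = false → p k a ∉ V := by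
      intro k β
      constructor
      · rintro ⟨⟨β', χ⟩, ⟨hτmem, hχx, hcond⟩, rfl⟩
        refine ⟨{u | χ u = true}, hτmem, hχx, fun n hn a ha hb hmem => ?_⟩
        have hcf : χ (p k a) = false := hcond n hn a ha hb
        rw [Set.mem_setOf_eq] at hmem
        rw [hcf] at hmem
        exact absurd hmem (by simp)
      · rintro ⟨V, hVo, hxV, hcond⟩
        refine ⟨⟨β, fun u => if u ∈ V then true else false⟩, ⟨?_, ?_, ?_⟩, rfl⟩
        · show IsOpen {u | (if u ∈ V then true else false) = true}
          have : {u | (if u ∈ V then true else false) = true} = V := by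
            ext u; by_cases h : u ∈ V <;> simp [h]
          rw [this]; exact hVo
        · show (if p k x ∈ V then true else false) = true
          simp [hxV]
        · intro n hn a ha hb
          show (if p k a ∈ V then true else false) = false
          simp [hcond n hn a ha hb]
    set 𝒰 : Set (ℕ → Bool) := ⋃ k, Q k with hUdef
    have hmemU : ∀ β : ℕ → Bool, β ∈ 𝒰 ↔ ¬ Large {n ∈ C | β n = false} := by
      intro β
      rw [hUdef, Set.mem_iUnion, hnotlarge]
      refine exists_congr fun k => ?_
      rw [hQmem k β]
      refine exists_congr fun V => and_congr_right fun hVo => and_congr_right fun hxV => ?_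
      constructor
      · intro h a ha
        obtain ⟨n, hn, han⟩ := Set.mem_iUnion₂.1 ha
        exact h n hn.1 a han hn.2
      · intro h n hn a ha hb
        exact h a (Set.mem_iUnion₂.2 ⟨n, ⟨hn, hb⟩, ha⟩)
    have hCdiff : ∀ β : ℕ → Bool, C \ {n ∈ C | β n = true} = {n ∈ C | β n = false} := by
      intro β; ext n
      simp only [Set.mem_diff, Set.mem_sep_iff, not_and, Bool.not_eq_true]
      constructor
      · rintro ⟨hnC, h⟩; exact ⟨hnC, h hnC⟩
      · rintro ⟨hnC, h⟩; exact ⟨hnC, fun _ => h⟩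
    have hUiff : ∀ β : ℕ → Bool, β ∈ 𝒰 ↔ Large {n ∈ C | β n = true} := by
      intro β
      rw [hmemU β, ← hCdiff β]
      constructor
      · intro h
        rcases dicho {n ∈ C | β n = true} (fun n hn => hn.1) with h' | h'
        · exact h'
        · exact absurd h' h
      · intro h
        exact hns _ (fun n hn => hn.1) h
    set ψC := flipHomeo C with hψC
    have hsetψC : ∀ β : ℕ → Bool, {n ∈ C | ψC β n = true} = {n ∈ C | β n = false} := by
      intro β; ext n
      simp only [Set.mem_sep_iff]
      constructor
      · rintro ⟨hnC, h⟩
        rw [flipHomeo_apply_mem hnC] at h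
        exact ⟨hnC, by simpa using h⟩
      · rintro ⟨hnC, h⟩
        rw [flipHomeo_apply_mem hnC, h]
        exact ⟨hnC, rfl⟩
    have hUc : 𝒰ᶜ = ψC ⁻¹' 𝒰 := by
      ext β
      simp only [Set.mem_compl_iff, Set.mem_preimage]
      rw [hUiff, hUiff, hsetψC, ← hCdiff β]
      constructor
      · intro h
        rcases dicho {n ∈ C | β n = true} (fun n hn => hn.1) with h' | h'
        · exact absurd h' h
        · exact h'
      · intro h h'
        exact hns _ (fun n hn => hn.1) h' h
    borelize (ℕ → Bool)
    have hUan : AnalyticSet 𝒰 := MeasureTheory.AnalyticSet.iUnion hQan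
    have hUcan : AnalyticSet 𝒰ᶜ := by
      haveI : PolishSpace (ℕ → Bool) := @instPolishSpaceOfSeparableSpaceOfIsCompletelyMetrizableSpace _ _ inferInstance inferInstance
      rw [hUc]; exact hUan.preimage ψC.continuous
    have hUmeas : MeasurableSet 𝒰 := hUan.measurableSet_of_compl hUcan
    obtain ⟨U, hUo, hUeq⟩ := hUmeas.residualEq_isOpen
    have hM : {β : ℕ → Bool | β ∈ 𝒰 ↔ β ∈ U} ∈ residual (ℕ → Bool) := by
      filter_upwards [hUeq] with β h
      exact iff_of_eq h
    rcases Set.eq_empty_or_nonempty U with rfl | ⟨a, haU⟩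
    · have h1 : 𝒰ᶜ ∈ residual (ℕ → Bool) :=
        Filter.mem_of_superset hM (by intro β h; simpa using h)
      have h2 : ψC ⁻¹' 𝒰ᶜ ∈ residual (ℕ → Bool) := by
        refine Filter.mem_map.1 ?_
        rw [ψC.residual_map_eq]
        exact h1
      have hne : (𝒰ᶜ ∩ ψC ⁻¹' 𝒰ᶜ).Nonempty :=
        (dense_of_mem_residual (Filter.inter_mem h1 h2)).nonempty
      obtain ⟨β, hβ1, hβ2⟩ := hne
      have hn1 : ¬ Large {n ∈ C | β n = true} := fun h => hβ1 ((hUiff β).2 h)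
      have hn2 : ¬ Large {n ∈ C | β n = false} := by
        intro h
        apply hβ2
        show ψC β ∈ 𝒰
        rw [hUiff, hsetψC]
        exact h
      rcases dicho {n ∈ C | β n = true} (fun n hn => hn.1) with h' | h'
      · exact hn1 h'
      · rw [hCdiff β] at h'
        exact hn2 h'
    · obtain ⟨I, u, hIu, hIsub⟩ := isOpen_pi_iff.1 hUo a haU
      set cyl := (I : Set ℕ).pi (fun n => ({a n} : Set Bool)) with hcyl
      have hcylopen : IsOpen cyl :=
        isOpen_set_pi I.finite_toSet (fun n _ => isOpen_discrete _)
      have hcylsub : cyl ⊆ U := by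
        refine subset_trans (Set.pi_mono fun n hn => ?_) hIsub
        exact Set.singleton_subset_iff.2 (hIu n hn).2
      have hacyl : a ∈ cyl := fun n _ => rfl
      set ψ := flipHomeo (C \ ↑I) with hψ
      have hψcyl : ∀ β ∈ cyl, ψ β ∈ cyl := by
        intro β hβ n hn
        have hnot : n ∉ C \ (↑I : Set ℕ) := fun h => h.2 hn
        show ψ β n ∈ ({a n} : Set Bool)
        rw [hψ, flipHomeo_apply_not_mem hnot]
        exact hβ n hn
      have hψM : ψ ⁻¹' {β : ℕ → Bool | β ∈ 𝒰 ↔ β ∈ U} ∈ residual (ℕ → Bool) := by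
        refine Filter.mem_map.1 ?_
        rw [ψ.residual_map_eq]
        exact hM
      obtain ⟨β, hβcyl, hβM, hβψM⟩ :
          ∃ β, β ∈ cyl ∧ (β ∈ 𝒰 ↔ β ∈ U) ∧ (ψ β ∈ 𝒰 ↔ ψ β ∈ U) := by
        obtain ⟨β, hβc, hβmm⟩ := (dense_of_mem_residual
          (Filter.inter_mem hM hψM)).inter_open_nonempty cyl hcylopen ⟨a, hacyl⟩
        exact ⟨β, hβc, hβmm.1, hβmm.2⟩
      have hL1 : Large {n ∈ C | β n = true} := (hUiff β).1 (hβM.2 (hcylsub hβcyl))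
      have hL2 : Large {n ∈ C | ψ β n = true} :=
        (hUiff (ψ β)).1 (hβψM.2 (hcylsub (hψcyl β hβcyl)))
      have hLint : Large ({n ∈ C | β n = true} ∩ {n ∈ C | ψ β n = true}) :=
        hinter _ _ (fun n hn => hn.1) (fun n hn => hn.1) hL1 hL2
      have hsubI : {n ∈ C | β n = true} ∩ {n ∈ C | ψ β n = true} ⊆ (↑I : Set ℕ) := by
        rintro n ⟨⟨hnC, hb⟩, ⟨-, hb'⟩⟩
        by_contra hnI
        have hmem : n ∈ C \ (↑I : Set ℕ) := ⟨hnC, hnI⟩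
        rw [hψ, flipHomeo_apply_mem hmem, hb] at hb'
        exact absurd hb' (by simp)
      exact hnotfin _ (I.finite_toSet.subset hsubI) hLint
  -- level-k selectors
  have hsel : ∀ (k : ℕ) (B : Set ℕ), Large B →
      ∃ T ⊆ Res B, p k x ∈ closure (p k '' T) ∧ ∀ n, (T ∩ F n).Subsingleton := by
    intro k B hB
    set A' := p k '' Res B with hA'
    have hxA' : p k x ∈ closure A' := (key2 (Res B) x).1 hB k
    set σ : X k → ↥Y := Function.invFunOn (p k) (Res B) with hσ
    have hσmem : ∀ u ∈ A', σ u ∈ Res B := fun u hu => Function.invFunOn_mem (by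
      obtain ⟨a, ha, rfl⟩ := hu; exact ⟨a, ha, rfl⟩)
    have hσeq : ∀ u ∈ A', p k (σ u) = u := fun u hu => Function.invFunOn_eq (by
      obtain ⟨a, ha, rfl⟩ := hu; exact ⟨a, ha, rfl⟩)
    set G : ℕ → Set (X k) := fun n => {u ∈ A' | σ u ∈ F n} with hG
    have hGfin : ∀ n, (G n).Finite := by
      intro n
      have him : σ '' G n ⊆ F n := by rintro _ ⟨u, hu, rfl⟩; exact hu.2
      have hinj : Set.InjOn σ (G n) := by
        intro u hu v hv huv
        rw [← hσeq u hu.1, ← hσeq v hv.1, huv]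
      exact Set.Finite.of_finite_image ((hFfin n).subset him) hinj
    have hGdis : Pairwise fun i j => Disjoint (G i) (G j) := by
      intro i j hij
      rw [Set.disjoint_left]
      rintro u hui huj
      exact Set.disjoint_left.1 (hFdis hij) hui.2 huj.2
    have hGU : ⋃ n, G n = A' := by
      apply Set.Subset.antisymm
      · rintro u hu; obtain ⟨n, hn⟩ := Set.mem_iUnion.1 hu; exact hn.1
      · intro u hu
        have : σ u ∈ A := hResA B (hσmem u hu)
        rw [← hFU] at this
        obtain ⟨n, hn⟩ := Set.mem_iUnion.1 this
        exact Set.mem_iUnion.2 ⟨n, hu, hn⟩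
    obtain ⟨T', hT'sub, hT'cl, hT'sel⟩ := hq k A' (p k x) hxA' G hGfin hGdis hGU
    refine ⟨σ '' T', ?_, ?_, ?_⟩
    · rintro _ ⟨u, hu, rfl⟩; exact hσmem u (hT'sub hu)
    · have him : p k '' (σ '' T') = T' := by
        rw [Set.image_image]
        calc (fun u => p k (σ u)) '' T'
            = id '' T' := Set.image_congr (fun u hu => hσeq u (hT'sub hu))
          _ = T' := Set.image_id T'
      rw [him]; exact hT'cl
    · intro n a ha b hb
      obtain ⟨⟨u, hu, rfl⟩, haF⟩ := ha
      obtain ⟨⟨v, hv, rfl⟩, hbF⟩ := hb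
      have hun : u ∈ G n := ⟨hT'sub hu, haF⟩
      have hvn : v ∈ G n := ⟨hT'sub hv, hbF⟩
      rw [hT'sel n ⟨hu, hun⟩ ⟨hv, hvn⟩]
  -- recursion: disjoint large reservoirs
  choose pick hpick1 hpick2 hpick3 using hsplit
  set CC : ℕ → {C : Set ℕ // Large C} :=
    fun k => Nat.rec ⟨Set.univ, hLA⟩ (fun _ prev => ⟨prev.1 \ pick prev.1 prev.2, hpick3 prev.1 prev.2⟩) k with hCC
  set B : ℕ → Set ℕ := fun k => pick (CC k).1 (CC k).2 with hB
  have hCCsucc : ∀ k, (CC (k + 1)).1 = (CC k).1 \ B k := fun k => rfl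
  have hBL : ∀ k, Large (B k) := fun k => hpick2 _ _
  have hBsub : ∀ k, B k ⊆ (CC k).1 := fun k => hpick1 _ _
  have hCCmono : ∀ j k, k ≤ j → (CC j).1 ⊆ (CC k).1 := by
    intro j k h
    induction j, h using Nat.le_induction with
    | base => exact subset_rfl
    | succ m h ih => exact (by rw [hCCsucc m]; exact (Set.diff_subset).trans ih)
  have hBdis : ∀ j k, j < k → Disjoint (B j) (B k) := by
    intro j k hjk
    have : B k ⊆ (CC (j + 1)).1 := (hBsub k).trans (hCCmono k (j + 1) hjk)
    rw [hCCsucc j] at this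
    exact Set.disjoint_of_subset_right this Set.disjoint_sdiff_right
  choose T hTsub hTcl hTsel using fun k => hsel k (B k) (hBL k)
  refine ⟨⋃ k, T k, ?_, ?_, ?_⟩
  · exact Set.iUnion_subset fun k => (hTsub k).trans (hResA (B k))
  · rw [key2]
    intro k
    exact closure_mono (Set.image_mono (Set.subset_iUnion T k)) (hTcl k)
  · -- selector property
    intro n a ha b hb
    obtain ⟨⟨_, ⟨j, rfl⟩, haj⟩, haF⟩ := ha
    obtain ⟨⟨_, ⟨m, rfl⟩, hbm⟩, hbF⟩ := hb
    have hsupport : ∀ i c, c ∈ T i → c ∈ F n → n ∈ B i := by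
      intro i c hc hcF
      obtain ⟨n', hn', hcn'⟩ := Set.mem_iUnion₂.1 (hTsub i hc)
      rcases eq_or_ne n n' with rfl | hne
      · exact hn'
      · exact absurd hcn' (Set.disjoint_left.1 (hFdis hne) hcF)
    have hnj : n ∈ B j := hsupport j a haj haF
    have hnm : n ∈ B m := hsupport m b hbm hbF
    have hjm : j = m := by
      rcases lt_trichotomy j m with h | h | h
      · exact absurd rfl ((hBdis j m h).ne_of_mem hnj hnm)
      · exact h
      · exact absurd rfl ((hBdis m j h).ne_of_mem hnm hnj)
    subst hjm
    exact hTsel j n ⟨haj, haF⟩ ⟨hbm, hbF⟩
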